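/- For integers n, m ≥ 3, the F-index of the edge R-join of the cycle C_n and the cycle C_m is F(C_n ∨̱_R C_m) = n(m + 2)³ + mn³ + 6mn² + 12mn + 8m + 64n. -/

import Mathlib

/-- The subdivision graph `S(G)`: a new vertex is inserted into each edge of `G`
(each edge is replaced by a path of length 2). The inserted vertices form the
right summand `↥G.edgeSet`. -/
def Sgraph {V : Type*} (G : SimpleGraph V) : SimpleGraph (V ⊕ ↥G.edgeSet) where
  Adj x y :=
    match x, y with
    | Sum.inl v, Sum.inr e => v ∈ (e : Sym2 V)
    | Sum.inr e, Sum.inl v => v ∈ (e : Sym2 V)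
    | _, _ => False
  symm := by constructor; rintro (v | e) (w | f) h <;> exact h
  loopless := by constructor; rintro (v | e) h <;> exact h

/-- The graph `R(G)`: obtained from `G` by inserting a new vertex into each edge of `G`
and joining each new vertex to the end vertices of its corresponding edge. -/
def Rgraph {V : Type*} (G : SimpleGraph V) : SimpleGraph (V ⊕ ↥G.edgeSet) where
  Adj x y :=
    match x, y with
    | Sum.inl v, Sum.inl w => G.Adj v w
    | Sum.inl v, Sum.inr e => v ∈ (e : Sym2 V)
    | Sum.inr e, Sum.inl v => v ∈ (e : Sym2 V)
    | Sum.inr _, Sum.inr _ => False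
  symm := by
    constructor
    rintro (v | e) (w | f) h
    · exact G.adj_symm h
    · exact h
    · exact h
    · exact h
  loopless := by
    constructor
    rintro (v | e) h
    · exact G.irrefl h
    · exact h

/-- The graph `Q(G)`: obtained from `G` by inserting a new vertex into each edge of `G`,
then joining by edges those pairs of new vertices lying on adjacent edges of `G`. -/
def Qgraph {V : Type*} (G : SimpleGraph V) : SimpleGraph (V ⊕ ↥G.edgeSet) where
  Adj x y :=
    match x, y with
    | Sum.inl _, Sum.inl _ => False
    | Sum.inl v, Sum.inr e => v ∈ (e : Sym2 V)
    | Sum.inr e, Sum.inl v => v ∈ (e : Sym2 V)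
    | Sum.inr e, Sum.inr f => e ≠ f ∧ ∃ v, v ∈ (e : Sym2 V) ∧ v ∈ (f : Sym2 V)
  symm := by
    constructor
    rintro (v | e) (w | f) h
    · exact h
    · exact h
    · exact h
    · exact ⟨h.1.symm, by obtain ⟨v, h1, h2⟩ := h.2; exact ⟨v, h2, h1⟩⟩
  loopless := by
    constructor
    rintro (v | e) h
    · exact h
    · exact h.1 rfl

/-- The total graph `T(G)`: obtained from `G` by inserting a new vertex into each edge,
joining each new vertex to the end vertices of its corresponding edge, and joining by
edges those pairs of new vertices lying on adjacent edges of `G`. -/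
def Tgraph {V : Type*} (G : SimpleGraph V) : SimpleGraph (V ⊕ ↥G.edgeSet) where
  Adj x y :=
    match x, y with
    | Sum.inl v, Sum.inl w => G.Adj v w
    | Sum.inl v, Sum.inr e => v ∈ (e : Sym2 V)
    | Sum.inr e, Sum.inl v => v ∈ (e : Sym2 V)
    | Sum.inr e, Sum.inr f => e ≠ f ∧ ∃ v, v ∈ (e : Sym2 V) ∧ v ∈ (f : Sym2 V)
  symm := by
    constructor
    rintro (v | e) (w | f) h
    · exact G.adj_symm h
    · exact h
    · exact h
    · exact ⟨h.1.symm, by obtain ⟨v, h1, h2⟩ := h.2; exact ⟨v, h2, h1⟩⟩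
  loopless := by
    constructor
    rintro (v | e) h
    · exact G.irrefl h
    · exact h.1 rfl

/-- The disjoint union of `H` and `K` together with all edges joining a vertex `a` of `H`
with `P a` to every vertex of `K`. -/
def joinOn {A B : Type*} (H : SimpleGraph A) (K : SimpleGraph B) (P : A → Prop) :
    SimpleGraph (A ⊕ B) where
  Adj x y :=
    match x, y with
    | Sum.inl a, Sum.inl a' => H.Adj a a'
    | Sum.inr b, Sum.inr b' => K.Adj b b'
    | Sum.inl a, Sum.inr _ => P a
    | Sum.inr _, Sum.inl a => P a
  symm := by
    constructor
    rintro (a | b) (a' | b') h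
    · exact H.adj_symm h
    · exact h
    · exact h
    · exact K.adj_symm h
  loopless := by
    constructor
    rintro (a | b) h
    · exact H.irrefl h
    · exact K.irrefl h

/-- The vertex S-join `G₁ ∨̇_S G₂`: obtained from `S(G₁)` and `G₂` by joining each vertex
of `V(G₁)` to every vertex of `G₂`. -/
def vertexSJoin {V₁ V₂ : Type*} (G₁ : SimpleGraph V₁) (G₂ : SimpleGraph V₂) :
    SimpleGraph ((V₁ ⊕ ↥G₁.edgeSet) ⊕ V₂) :=
  joinOn (Sgraph G₁) G₂ (fun x => x.isLeft)

/-- The edge S-join `G₁ ∨̱_S G₂`: obtained from `S(G₁)` and `G₂` by joining each inserted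
vertex (each vertex of `I(G₁)`) to every vertex of `G₂`. -/
def edgeSJoin {V₁ V₂ : Type*} (G₁ : SimpleGraph V₁) (G₂ : SimpleGraph V₂) :
    SimpleGraph ((V₁ ⊕ ↥G₁.edgeSet) ⊕ V₂) :=
  joinOn (Sgraph G₁) G₂ (fun x => x.isRight)

/-- The vertex R-join `G₁ ∨̇_R G₂`. -/
def vertexRJoin {V₁ V₂ : Type*} (G₁ : SimpleGraph V₁) (G₂ : SimpleGraph V₂) :
    SimpleGraph ((V₁ ⊕ ↥G₁.edgeSet) ⊕ V₂) :=
  joinOn (Rgraph G₁) G₂ (fun x => x.isLeft)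

/-- The edge R-join `G₁ ∨̱_R G₂`. -/
def edgeRJoin {V₁ V₂ : Type*} (G₁ : SimpleGraph V₁) (G₂ : SimpleGraph V₂) :
    SimpleGraph ((V₁ ⊕ ↥G₁.edgeSet) ⊕ V₂) :=
  joinOn (Rgraph G₁) G₂ (fun x => x.isRight)

/-- The vertex Q-join `G₁ ∨̇_Q G₂`. -/
def vertexQJoin {V₁ V₂ : Type*} (G₁ : SimpleGraph V₁) (G₂ : SimpleGraph V₂) :
    SimpleGraph ((V₁ ⊕ ↥G₁.edgeSet) ⊕ V₂) :=
  joinOn (Qgraph G₁) G₂ (fun x => x.isLeft)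

/-- The edge Q-join `G₁ ∨̱_Q G₂`. -/
def edgeQJoin {V₁ V₂ : Type*} (G₁ : SimpleGraph V₁) (G₂ : SimpleGraph V₂) :
    SimpleGraph ((V₁ ⊕ ↥G₁.edgeSet) ⊕ V₂) :=
  joinOn (Qgraph G₁) G₂ (fun x => x.isRight)

/-- The vertex T-join `G₁ ∨̇_T G₂`. -/
def vertexTJoin {V₁ V₂ : Type*} (G₁ : SimpleGraph V₁) (G₂ : SimpleGraph V₂) :
    SimpleGraph ((V₁ ⊕ ↥G₁.edgeSet) ⊕ V₂) :=
  joinOn (Tgraph G₁) G₂ (fun x => x.isLeft)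

/-- The edge T-join `G₁ ∨̱_T G₂`. -/
def edgeTJoin {V₁ V₂ : Type*} (G₁ : SimpleGraph V₁) (G₂ : SimpleGraph V₂) :
    SimpleGraph ((V₁ ⊕ ↥G₁.edgeSet) ⊕ V₂) :=
  joinOn (Tgraph G₁) G₂ (fun x => x.isRight)

/-- Degree of a vertex in a graph on a finite vertex type. -/
noncomputable def gdeg {V : Type*} [Finite V] (G : SimpleGraph V) (v : V) : ℕ :=
  haveI : Fintype ↥(G.neighborSet v) := Fintype.ofFinite _
  G.degree v

/-- The forgotten topological index (F-index): `F(G) = ∑_{v ∈ V(G)} d_G(v)³`. -/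
noncomputable def Findex {V : Type*} [Finite V] (G : SimpleGraph V) : ℕ :=
  haveI := Fintype.ofFinite V
  ∑ v : V, gdeg G v ^ 3

/-- The first Zagreb index: `M₁(G) = ∑_{v ∈ V(G)} d_G(v)²`. -/
noncomputable def M1 {V : Type*} [Finite V] (G : SimpleGraph V) : ℕ :=
  haveI := Fintype.ofFinite V
  ∑ v : V, gdeg G v ^ 2

/-- `M₄(G) = ∑_{v ∈ V(G)} d_G(v)⁴`. -/
noncomputable def M4 {V : Type*} [Finite V] (G : SimpleGraph V) : ℕ :=
  haveI := Fintype.ofFinite V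
  ∑ v : V, gdeg G v ^ 4

/-- The hyper Zagreb index: `HM(G) = ∑_{uv ∈ E(G)} (d_G(u) + d_G(v))²`. -/
noncomputable def HM {V : Type*} [Finite V] (G : SimpleGraph V) : ℕ :=
  haveI : Fintype ↥G.edgeSet := Fintype.ofFinite _
  ∑ e : ↥G.edgeSet,
    Sym2.lift ⟨fun u v => (gdeg G u + gdeg G v) ^ 2,
      fun u v => by dsimp only; rw [add_comm]⟩ (e : Sym2 V)

/-- The redefined Zagreb index:
`ReZM(G) = ∑_{uv ∈ E(G)} d_G(u) d_G(v) (d_G(u) + d_G(v))`. -/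
noncomputable def ReZM {V : Type*} [Finite V] (G : SimpleGraph V) : ℕ :=
  haveI : Fintype ↥G.edgeSet := Fintype.ofFinite _
  ∑ e : ↥G.edgeSet,
    Sym2.lift ⟨fun u v => gdeg G u * gdeg G v * (gdeg G u + gdeg G v),
      fun u v => by dsimp only; ring⟩ (e : Sym2 V)

/-- The number of edges of `G`. -/
noncomputable def numEdges {V : Type*} (G : SimpleGraph V) : ℕ :=
  Nat.card ↥G.edgeSet



section Aux

open SimpleGraph

lemma gdeg_eq_natCard {V : Type*} [Finite V] (G : SimpleGraph V) (v : V) :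
    gdeg G v = Nat.card (G.neighborSet v) := by
  unfold gdeg
  letI : Fintype ↥(G.neighborSet v) := Fintype.ofFinite _
  rw [← card_neighborSet_eq_degree, Nat.card_eq_fintype_card]

lemma natCard_mem_edge {V : Type*} [Fintype V] [DecidableEq V] (G : SimpleGraph V)
    [DecidableRel G.Adj] (v : V) :
    ({e : ↥G.edgeSet | v ∈ (e : Sym2 V)} : Set ↥G.edgeSet).ncard = G.degree v := by
  rw [Set.ncard_eq_toFinset_card', Set.toFinset_card, ← card_incidenceSet_eq_degree]
  refine Fintype.card_congr ⟨fun x => ⟨x.1.1, x.1.2, x.2⟩, fun y => ⟨⟨y.1, y.2.1⟩, y.2.2⟩,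
    fun x => rfl, fun y => rfl⟩

lemma Rgraph_neighborSet_inl {V : Type*} (G : SimpleGraph V) (v : V) :
    (Rgraph G).neighborSet (Sum.inl v) =
      Sum.inl '' G.neighborSet v ∪ Sum.inr '' {e : ↥G.edgeSet | v ∈ (e : Sym2 V)} := by
  ext x
  rcases x with w | e <;>
    simp [Rgraph, SimpleGraph.neighborSet, SimpleGraph.Adj]

lemma Rgraph_neighborSet_inr {V : Type*} (G : SimpleGraph V) (e : ↥G.edgeSet) :
    (Rgraph G).neighborSet (Sum.inr e) = Sum.inl '' {v : V | v ∈ (e : Sym2 V)} := by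
  ext x
  rcases x with w | f <;>
    simp [Rgraph, SimpleGraph.neighborSet, SimpleGraph.Adj, Sym2.mem_iff]

lemma edgeRJoin_neighborSet_inl_inl {V₁ V₂ : Type*} (G₁ : SimpleGraph V₁)
    (G₂ : SimpleGraph V₂) (v : V₁) :
    (edgeRJoin G₁ G₂).neighborSet (Sum.inl (Sum.inl v)) =
      Sum.inl '' ((Rgraph G₁).neighborSet (Sum.inl v)) := by
  ext x
  rcases x with (w | e) | b <;>
    simp [edgeRJoin, joinOn, SimpleGraph.neighborSet, SimpleGraph.Adj]

lemma edgeRJoin_neighborSet_inl_inr {V₁ V₂ : Type*} (G₁ : SimpleGraph V₁)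
    (G₂ : SimpleGraph V₂) (e : ↥G₁.edgeSet) :
    (edgeRJoin G₁ G₂).neighborSet (Sum.inl (Sum.inr e)) =
      Sum.inl '' ((Rgraph G₁).neighborSet (Sum.inr e)) ∪ Sum.inr '' Set.univ := by
  ext x
  rcases x with (w | f) | b <;>
    simp [edgeRJoin, joinOn, SimpleGraph.neighborSet, SimpleGraph.Adj]

lemma edgeRJoin_neighborSet_inr {V₁ V₂ : Type*} (G₁ : SimpleGraph V₁)
    (G₂ : SimpleGraph V₂) (b : V₂) :
    (edgeRJoin G₁ G₂).neighborSet (Sum.inr b) =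
      Sum.inr '' G₂.neighborSet b ∪ (Sum.inl ∘ Sum.inr) '' (Set.univ : Set ↥G₁.edgeSet) := by
  ext x
  rcases x with (w | f) | c <;>
    simp [edgeRJoin, joinOn, SimpleGraph.neighborSet, SimpleGraph.Adj]


lemma disj_inl_inr {A B : Type*} (s : Set A) (t : Set B) :
    Disjoint (Sum.inl '' s) (Sum.inr '' t : Set (A ⊕ B)) := by
  rw [Set.disjoint_left]
  rintro x ⟨a, -, rfl⟩ ⟨b, -, h⟩
  exact Sum.inr_ne_inl h

lemma ncard_neighborSet_eq_degree {V : Type*} [Fintype V] (G : SimpleGraph V)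
    [DecidableRel G.Adj] (v : V) : (G.neighborSet v).ncard = G.degree v := by
  rw [Set.ncard_eq_toFinset_card', Set.toFinset_card, card_neighborSet_eq_degree]

lemma ncard_mem_sym2 {V : Type*} (G : SimpleGraph V) (e : ↥G.edgeSet) :
    ({v : V | v ∈ (e : Sym2 V)}).ncard = 2 := by
  obtain ⟨e, he⟩ := e
  induction e using Sym2.ind with
  | _ a b =>
    have hab : a ≠ b := (G.mem_edgeSet.mp he).ne
    have h2 : {v : V | v ∈ (s(a, b) : Sym2 V)} = {a, b} := by
      ext x; simp [Sym2.mem_iff]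
    rw [h2, Set.ncard_pair hab]

lemma gdeg_edgeRJoin_inl_inl {V₁ V₂ : Type*} [Fintype V₁] [Fintype V₂] [DecidableEq V₁]
    (G₁ : SimpleGraph V₁) (G₂ : SimpleGraph V₂) [DecidableRel G₁.Adj] (v : V₁) :
    gdeg (edgeRJoin G₁ G₂) (Sum.inl (Sum.inl v)) = 2 * G₁.degree v := by
  rw [gdeg_eq_natCard, edgeRJoin_neighborSet_inl_inl, Nat.card_coe_set_eq,
    Set.ncard_image_of_injective _ Sum.inl_injective, Rgraph_neighborSet_inl,
    Set.ncard_union_eq (disj_inl_inr _ _) (Set.toFinite _) (Set.toFinite _),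
    Set.ncard_image_of_injective _ Sum.inl_injective,
    Set.ncard_image_of_injective _ Sum.inr_injective, natCard_mem_edge,
    ncard_neighborSet_eq_degree, two_mul]

lemma gdeg_edgeRJoin_inl_inr {V₁ V₂ : Type*} [Fintype V₁] [Fintype V₂]
    (G₁ : SimpleGraph V₁) (G₂ : SimpleGraph V₂) (e : ↥G₁.edgeSet) :
    gdeg (edgeRJoin G₁ G₂) (Sum.inl (Sum.inr e)) = 2 + Fintype.card V₂ := by
  rw [gdeg_eq_natCard, edgeRJoin_neighborSet_inl_inr, Nat.card_coe_set_eq,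
    Set.ncard_union_eq (disj_inl_inr _ _) (Set.toFinite _) (Set.toFinite _),
    Set.ncard_image_of_injective _ Sum.inl_injective,
    Set.ncard_image_of_injective _ Sum.inr_injective, Rgraph_neighborSet_inr,
    Set.ncard_image_of_injective _ Sum.inl_injective, ncard_mem_sym2,
    Set.ncard_univ, Nat.card_eq_fintype_card]

lemma gdeg_edgeRJoin_inr {V₁ V₂ : Type*} [Fintype V₁] [Fintype V₂]
    (G₁ : SimpleGraph V₁) (G₂ : SimpleGraph V₂) [DecidableRel G₂.Adj] (b : V₂) :
    gdeg (edgeRJoin G₁ G₂) (Sum.inr b) = G₂.degree b + Nat.card ↥G₁.edgeSet := by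
  have hinj : Function.Injective (Sum.inl ∘ Sum.inr : ↥G₁.edgeSet → (V₁ ⊕ ↥G₁.edgeSet) ⊕ V₂) :=
    Sum.inl_injective.comp Sum.inr_injective
  have hdisj : Disjoint (Sum.inr '' G₂.neighborSet b)
      (((Sum.inl ∘ Sum.inr : ↥G₁.edgeSet → (V₁ ⊕ ↥G₁.edgeSet) ⊕ V₂)) ''
        (Set.univ : Set ↥G₁.edgeSet)) := by
    rw [Set.disjoint_left]
    rintro x ⟨c, -, rfl⟩ ⟨f, -, h⟩
    exact Sum.inl_ne_inr h
  rw [gdeg_eq_natCard, edgeRJoin_neighborSet_inr, Nat.card_coe_set_eq,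
    Set.ncard_union_eq hdisj (Set.toFinite _) (Set.toFinite _),
    Set.ncard_image_of_injective _ Sum.inr_injective,
    Set.ncard_image_of_injective _ hinj, Set.ncard_univ,
    ncard_neighborSet_eq_degree]

lemma card_edgeSet_cycle (a : ℕ) :
    Nat.card ↥(SimpleGraph.cycleGraph (a + 3)).edgeSet = a + 3 := by
  have h := (SimpleGraph.cycleGraph (a + 3)).sum_degrees_eq_twice_card_edges
  simp only [cycleGraph_degree_three_le, Finset.sum_const, Finset.card_univ,
    Fintype.card_fin, smul_eq_mul] at h
  have h2 : (SimpleGraph.cycleGraph (a + 3)).edgeFinset.card =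
      Nat.card ↥(SimpleGraph.cycleGraph (a + 3)).edgeSet := by
    rw [Nat.card_coe_set_eq, Set.ncard_eq_toFinset_card']
    simp only [SimpleGraph.edgeFinset]
  omega

lemma Findex_eq_sum {V : Type*} [Fintype V] (G : SimpleGraph V) :
    Findex G = ∑ v : V, gdeg G v ^ 3 := by
  unfold Findex
  congr!

end Aux

theorem Findex_edgeRJoin_ex14 (n m : ℕ) (hn : 3 ≤ n) (hm : 3 ≤ m) :
    (Findex (edgeRJoin (SimpleGraph.cycleGraph n) (SimpleGraph.cycleGraph m)) : ℤ) =
      (n : ℤ) * ((m : ℤ) + 2) ^ 3 + (m : ℤ) * (n : ℤ) ^ 3 + 6 * (m : ℤ) * (n : ℤ) ^ 2 + 12 * (m : ℤ) * (n : ℤ) + 8 * (m : ℤ) + 64 * (n : ℤ) := by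
  obtain ⟨a, rfl⟩ : ∃ a, n = a + 3 := ⟨n - 3, by omega⟩
  obtain ⟨b, rfl⟩ : ∃ b, m = b + 3 := ⟨m - 3, by omega⟩
  have hE : Fintype.card ↥(SimpleGraph.cycleGraph (a + 3)).edgeSet = a + 3 := by
    rw [← Nat.card_eq_fintype_card]
    exact card_edgeSet_cycle a
  rw [Findex_eq_sum, Fintype.sum_sum_type, Fintype.sum_sum_type]
  simp only [gdeg_edgeRJoin_inl_inl, gdeg_edgeRJoin_inl_inr, gdeg_edgeRJoin_inr,
    SimpleGraph.cycleGraph_degree_three_le, card_edgeSet_cycle, Finset.sum_const,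
    Finset.card_univ, Fintype.card_fin, smul_eq_mul, hE]
  push_cast
  ring
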